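/- Let T = (S, s_init, R, L) be a labeled transition system in which every state has an R-successor, let G_1, …, G_n be non-blocking generalized Büchi automata over Σ with rewards rew_1 ≥ … ≥ rew_n, let B be the weighted Büchi automaton constructed from them, and let P = T ⊗ B. Then the maximum of Rew(τ) over all traces τ of T exists, the maximum of C(ρ) over all accepting runs ρ of P exists, and the two maxima are equal; moreover, there is an accepting run ρ* of P in prefix-suffix structure attaining this common maximum, and α(ρ*) is a trace of T with Rew(α(ρ*)) maximal among all traces of T. -/

import Mathlib

/-! Common definitions: labeled transition systems, Büchi automata,
generalized Büchi automata, products, weighted runs, fragments, rewards. -/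

/-- A labeled transition system `T = (S, s_init, R, L)`. -/
structure LTS (S : Type*) (A : Type*) where
  init : S
  trans : Set (S × S)
  label : S → A

namespace LTS

/-- An (infinite) trace of a transition system. -/
def IsTrace {S A : Type*} (T : LTS S A) (τ : ℕ → S) : Prop :=
  τ 0 = T.init ∧ ∀ i, (τ i, τ (i + 1)) ∈ T.trans

/-- The word produced by a trace. -/
def word {S A : Type*} (T : LTS S A) (τ : ℕ → S) : ℕ → A :=
  fun i => T.label (τ i)

end LTS

/-- A Büchi automaton `(Q, q_init, Σ, δ, F)`. -/
structure BA (Q : Type*) (A : Type*) where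
  init : Q
  trans : Set (Q × A × Q)
  acc : Set Q

namespace BA

/-- A run of a Büchi automaton over an infinite word. -/
def IsRun {Q A : Type*} (M : BA Q A) (w : ℕ → A) (ρ : ℕ → Q) : Prop :=
  ρ 0 = M.init ∧ ∀ i, (ρ i, w i, ρ (i + 1)) ∈ M.trans

/-- A run is accepting if it visits the accepting set infinitely often. -/
def IsAccepting {Q A : Type*} (M : BA Q A) (ρ : ℕ → Q) : Prop :=
  ∀ N, ∃ i, N ≤ i ∧ ρ i ∈ M.acc

/-- The language of a Büchi automaton. -/
def Lang {Q A : Type*} (M : BA Q A) : Set (ℕ → A) :=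
  {w | ∃ ρ, M.IsRun w ρ ∧ M.IsAccepting ρ}

/-- A Büchi automaton is non-blocking if every state has a successor on every letter. -/
def NonBlocking {Q A : Type*} (M : BA Q A) : Prop :=
  ∀ q σ, ∃ q', (q, σ, q') ∈ M.trans

end BA

/-- A generalized Büchi automaton with `m` acceptance sets `F_1, …, F_m`
(0-indexed as `acc 0, …, acc (m-1)`). -/
structure GBA (Q : Type*) (A : Type*) (m : ℕ) where
  init : Q
  trans : Set (Q × A × Q)
  acc : Fin m → Set Q

namespace GBA

/-- A run of a generalized Büchi automaton over an infinite word. -/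
def IsRun {Q A : Type*} {m : ℕ} (M : GBA Q A m) (w : ℕ → A) (ρ : ℕ → Q) : Prop :=
  ρ 0 = M.init ∧ ∀ i, (ρ i, w i, ρ (i + 1)) ∈ M.trans

/-- A run is accepting if it visits each acceptance set infinitely often. -/
def IsAccepting {Q A : Type*} {m : ℕ} (M : GBA Q A m) (ρ : ℕ → Q) : Prop :=
  ∀ l : Fin m, ∀ N, ∃ i, N ≤ i ∧ ρ i ∈ M.acc l

/-- The language of a generalized Büchi automaton. -/
def Lang {Q A : Type*} {m : ℕ} (M : GBA Q A m) : Set (ℕ → A) :=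
  {w | ∃ ρ, M.IsRun w ρ ∧ M.IsAccepting ρ}

/-- A GBA is non-blocking if every state has a successor on every letter. -/
def NonBlocking {Q A : Type*} {m : ℕ} (M : GBA Q A m) : Prop :=
  ∀ q σ, ∃ q', (q, σ, q') ∈ M.trans

end GBA

/-- Transitions of the product automaton `P = T ⊗ B`. -/
def ProdTrans {S A Q : Type*} (T : LTS S A) (M : BA Q A) : Set ((S × Q) × (S × Q)) :=
  {t | (t.1.1, t.2.1) ∈ T.trans ∧ (t.1.2, T.label t.1.1, t.2.2) ∈ M.trans}

/-- Accepting states `F_P = S × F` of the product automaton. -/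
def ProdAcc {S A Q : Type*} (_T : LTS S A) (M : BA Q A) : Set (S × Q) :=
  {p | p.2 ∈ M.acc}

/-- A run of the product automaton `P = T ⊗ B`. -/
def IsProdRun {S A Q : Type*} (T : LTS S A) (M : BA Q A) (ρ : ℕ → S × Q) : Prop :=
  ρ 0 = (T.init, M.init) ∧ ∀ i, (ρ i, ρ (i + 1)) ∈ ProdTrans T M

/-- An accepting run of the product automaton (visits `F_P` infinitely often). -/
def IsProdAccepting {S A Q : Type*} (T : LTS S A) (M : BA Q A) (ρ : ℕ → S × Q) : Prop :=
  ∀ N, ∃ i, N ≤ i ∧ ρ i ∈ ProdAcc T M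

/-- The weight of the `j`-th step of a sequence of product states, where `W` is the
weight function of the underlying weighted Büchi automaton:
`W_P(((s,q),(s',q'))) = W((q, L(s), q'))`. -/
def ProdStepW {S A Q : Type*} (T : LTS S A) (W : Q → A → Q → ℕ) (ρ : ℕ → S × Q)
    (j : ℕ) : ℕ :=
  W (ρ j).2 (T.label (ρ j).1) (ρ (j + 1)).2

/-- `ρ i … ρ k` is a fragment of the infinite run `ρ` (w.r.t. accepting set `F`):
both endpoints are accepting and no interior state is accepting. -/
def IsFragment {X : Type*} (F : Set X) (ρ : ℕ → X) (i k : ℕ) : Prop :=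
  i < k ∧ ρ i ∈ F ∧ ρ k ∈ F ∧ ∀ j, i < j → j < k → ρ j ∉ F

/-- Total weight of the segment from position `i` to position `k`, where `stepW j`
is the weight of the transition taken at position `j`. -/
def SegWeight (stepW : ℕ → ℕ) (i k : ℕ) : ℕ :=
  ∑ j ∈ Finset.Ico i k, stepW j

/-- The reward `C(ρ)` of the run `ρ` equals `c`: `c` is the maximum value that occurs
infinitely often in the sequence of fragment weights of `ρ`, i.e. fragments of weight `c`
occur infinitely often, and every value `v > c` occurs only finitely often. -/
def RunRewardIs {X : Type*} (F : Set X) (ρ : ℕ → X) (stepW : ℕ → ℕ) (c : ℕ) : Prop :=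
  (∀ N, ∃ i k, N ≤ i ∧ IsFragment F ρ i k ∧ SegWeight stepW i k = c) ∧
  (∀ v, c < v → ∃ N, ∀ i k, N ≤ i → IsFragment F ρ i k → SegWeight stepW i k ≠ v)

/-- A run is in prefix-suffix structure `ρ_pref · (ρ_suf)^ω` (with the first state
of `ρ_suf` accepting) iff it is eventually periodic with an accepting state at the
start of the periodic part. -/
def IsPrefixSuffix {X : Type*} (F : Set X) (ρ : ℕ → X) : Prop :=
  ∃ l k, 0 < k ∧ ρ l ∈ F ∧ ∀ i, l ≤ i → ρ (i + k) = ρ i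

/-- `f 0 f 1 … f k` is a finite path w.r.t. the edge relation `E`. -/
def IsFinPath {X : Type*} (E : Set (X × X)) (f : ℕ → X) (k : ℕ) : Prop :=
  ∀ t, t < k → (f t, f (t + 1)) ∈ E

/-- A fragment of a finite cycle `f 0 … f k`: a segment whose endpoints lie in `F` and
whose interior states do not. -/
def IsCycFrag {X : Type*} (F : Set X) (f : ℕ → X) (k i k' : ℕ) : Prop :=
  i < k' ∧ k' ≤ k ∧ f i ∈ F ∧ f k' ∈ F ∧ ∀ t, i < t → t < k' → f t ∉ F

section Construction

/-- The component set `C = {(j,l) : 1 ≤ j ≤ n, 1 ≤ l ≤ m_j} ∪ {(0,0)}` of the weighted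
Büchi automaton `B`; `none` plays the role of `(0,0)` and `some ⟨j,l⟩` (0-indexed) the
role of the component `(j+1, l+1)`. -/
abbrev BComp (n : ℕ) (m : Fin n → ℕ) : Type :=
  Option (Σ j : Fin n, Fin (m j))

variable {A : Type*} {n : ℕ} {Qs : Fin n → Type*} {m : Fin n → ℕ}

/-- The allowed moves between components of the weighted Büchi automaton `B`
(cases (1a), (1b), (2a), (2b), (2c), (2d)); `q` is the source tuple of GBA states. -/
def CompStep (G : ∀ j, GBA (Qs j) A (m j)) (q : ∀ j, Qs j) :
    BComp n m → BComp n m → Prop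
  | none, none => True
  | none, some jl' => (jl'.2 : ℕ) = 0
  | some jl, none => (jl.2 : ℕ) + 1 = m jl.1 ∧ q jl.1 ∈ (G jl.1).acc jl.2
  | some jl, some jl' =>
      (jl'.1 = jl.1 ∧ (jl'.2 : ℕ) = (jl.2 : ℕ) ∧ q jl.1 ∉ (G jl.1).acc jl.2) ∨
      (jl'.1 = jl.1 ∧ (jl'.2 : ℕ) = (jl.2 : ℕ) + 1 ∧ q jl.1 ∈ (G jl.1).acc jl.2) ∨
      ((jl.1 : ℕ) < (jl'.1 : ℕ) ∧ (jl.2 : ℕ) + 1 = m jl.1 ∧ (jl'.2 : ℕ) = 0 ∧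
        q jl.1 ∈ (G jl.1).acc jl.2)

/-- The weight of a transition of `B`, determined by the source and target components:
`rew j'` when newly entering the first component of layer `j'` (cases (1b), (2c)),
and `0` otherwise. -/
def CompWeight (rew : Fin n → ℕ) : BComp n m → BComp n m → ℕ
  | _, none => 0
  | c, some jl' => if (jl'.2 : ℕ) = 0 ∧ c ≠ some jl' then rew jl'.1 else 0

/-- The weighted Büchi automaton `B` built from the non-blocking GBAs `G 0, …, G (n-1)`:
state set `Q_1 × … × Q_n × C`, initial state `(q_init,1, …, q_init,n, (0,0))`,
accepting set `Q_1 × … × Q_n × {(0,0)}`. -/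
def BAut (G : ∀ j, GBA (Qs j) A (m j)) (_rew : Fin n → ℕ) :
    BA ((∀ j, Qs j) × BComp n m) A where
  init := (fun j => (G j).init, none)
  trans := {t | (∀ j, (t.1.1 j, t.2.1, t.2.2.1 j) ∈ (G j).trans) ∧
              CompStep G t.1.1 t.1.2 t.2.2.2}
  acc := {p | p.2 = none}

/-- The weight function `W : δ → ℕ` of the weighted Büchi automaton `B`. -/
def BWeight (rew : Fin n → ℕ) (p : (∀ j, Qs j) × BComp n m) (_ : A)
    (p' : (∀ j, Qs j) × BComp n m) : ℕ :=
  CompWeight rew p.2 p'.2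

open Classical in
/-- The reward of a trace `τ` of `T`: `Rew(τ) = Σ_{i, w(τ) ∈ L(G_i)} rew_i`. -/
noncomputable def TraceRew {S : Type*} (T : LTS S A) (G : ∀ j, GBA (Qs j) A (m j))
    (rew : Fin n → ℕ) (τ : ℕ → S) : ℕ :=
  ∑ j : Fin n, if T.word τ ∈ (G j).Lang then rew j else 0

end Construction

section AuxProofs
set_option maxRecDepth 10000

open Classical

variable {A : Type*} {n : ℕ} {Qs : Fin n → Type*} {m : Fin n → ℕ}

lemma gba_exists_run {Q : Type*} {k : ℕ} (M : GBA Q A k) (h : M.NonBlocking)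
    (w : ℕ → A) : ∃ ρ, M.IsRun w ρ := by
  choose f hf using h
  exact ⟨fun t => Nat.rec M.init (fun i q => f q (w i)) t, rfl, fun i => hf _ _⟩

lemma lts_exists_trace {S : Type*} (T : LTS S A)
    (h : ∀ s, ∃ s', (s, s') ∈ T.trans) : ∃ τ, T.IsTrace τ := by
  choose f hf using h
  exact ⟨fun t => Nat.rec T.init (fun _ s => f s) t, rfl, fun i => hf _⟩

lemma bcomp_some_inj {j j' : Fin n} {l : Fin (m j)} {l' : Fin (m j')}
    (h : (some ⟨j, l⟩ : BComp n m) = some ⟨j', l'⟩) : j = j' ∧ (l : ℕ) = (l' : ℕ) := by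
  obtain ⟨h1, h2⟩ := Sigma.mk.inj_iff.mp (Option.some.inj h)
  subst h1
  exact ⟨rfl, congrArg Fin.val (eq_of_heq h2)⟩

/-- Core fragment-structure induction: from a position `t` inside a fragment with
component `some ⟨j, lf⟩`, up to the fragment end `k`. -/
lemma frag_aux (G : ∀ j, GBA (Qs j) A (m j)) (rew : Fin n → ℕ)
    (q : ℕ → ∀ j, Qs j) (c : ℕ → BComp n m) (k : ℕ) (hk : c k = none) :
    ∀ d t (j : Fin n) (lf : Fin (m j)), k - t = d → t < k →
    (∀ s, t ≤ s → s < k → CompStep G (q s) (c s) (c (s + 1))) →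
    (∀ s, t ≤ s → s < k → c s ≠ none) →
    c t = some ⟨j, lf⟩ →
    ∃ Jset : Finset (Fin n),
      (∀ x ∈ Jset, (j : ℕ) < (x : ℕ)) ∧
      (∑ s ∈ Finset.Ico t k, CompWeight rew (c s) (c (s + 1))) = ∑ x ∈ Jset, rew x ∧
      (∀ l' : Fin (m j), lf ≤ l' → ∃ s, t ≤ s ∧ s < k ∧ q s j ∈ (G j).acc l') ∧
      (∀ x ∈ Jset, ∀ l' : Fin (m x), ∃ s, t ≤ s ∧ s < k ∧ q s x ∈ (G x).acc l') ∧
      (∀ x ∈ Jset, ∃ s lf', t ≤ s ∧ s < k ∧ c s = some ⟨x, lf'⟩) ∧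
      (∀ (x : Fin n) (lf' : Fin (m x)) (s : ℕ), t ≤ s → s < k → c s = some ⟨x, lf'⟩ →
        x = j ∨ x ∈ Jset) := by
  intro d
  induction d using Nat.strong_induction_on with
  | _ d IH =>
    intro t j lf hd htk hstep hint hct
    have hst := hstep t le_rfl htk
    rw [hct] at hst
    cases hc1 : c (t + 1) with
    | none =>
      -- fragment ends right after t
      have hk1 : k = t + 1 := by
        by_contra hne
        have h1 : t + 1 < k := by omega
        exact hint (t + 1) (by omega) h1 hc1
      rw [hc1] at hst
      simp only [CompStep] at hst
      obtain ⟨hlf, haccf⟩ := hst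
      refine ⟨∅, by simp, ?_, ?_, by simp, by simp, ?_⟩
      · subst hk1
        rw [Finset.sum_Ico_eq_sum_range]
        simp [hct, hc1, CompWeight]
      · intro l' hl'
        have : l' = lf := by
          have h1 := l'.isLt
          have h2 : (lf : ℕ) ≤ (l' : ℕ) := hl'
          exact Fin.ext (by omega)
        subst this
        exact ⟨t, le_rfl, htk, haccf⟩
      · intro x lf' s hts hsk hcs
        have : s = t := by omega
        subst this
        exact Or.inl (bcomp_some_inj (hcs.symm.trans hct)).1
    | some jl2 =>
      obtain ⟨j2, l2⟩ := jl2
      rw [hc1] at hst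
      simp only [CompStep] at hst
      have htk1 : t + 1 < k := by
        rcases Nat.lt_or_ge (t+1) k with h | h
        · exact h
        · exfalso
          have : t + 1 = k := by omega
          rw [this] at hc1
          rw [hk] at hc1
          exact nomatch hc1
      have hsum : (∑ s ∈ Finset.Ico t k, CompWeight rew (c s) (c (s + 1)))
          = CompWeight rew (c t) (c (t + 1))
            + ∑ s ∈ Finset.Ico (t + 1) k, CompWeight rew (c s) (c (s + 1)) :=
        Finset.sum_eq_sum_Ico_succ_bot (by omega) _
      have hIH := IH (k - (t + 1)) (by omega) (t + 1)
      rcases hst with ⟨hj2, hl2, hnacc⟩ | ⟨hj2, hl2, hacc⟩ | ⟨hjlt, hlf, hl2, hacc⟩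
      · -- case (2a) : stay
        subst hj2
        have hl2' : l2 = lf := Fin.ext hl2
        subst hl2'
        obtain ⟨Js, hJ1, hJ2, hJ3, hJ4, hJ5, hJ6⟩ :=
          hIH j2 l2 rfl htk1 (fun s hs => hstep s (by omega))
            (fun s hs => hint s (by omega)) hc1
        refine ⟨Js, hJ1, ?_, ?_, ?_, ?_, ?_⟩
        · rw [hsum, hct, hc1, hJ2]
          simp [CompWeight]
        · intro l' hl'
          obtain ⟨s, h1, h2, h3⟩ := hJ3 l' hl'
          exact ⟨s, by omega, h2, h3⟩
        · intro x hx l'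
          obtain ⟨s, h1, h2, h3⟩ := hJ4 x hx l'
          exact ⟨s, by omega, h2, h3⟩
        · intro x hx
          obtain ⟨s, lf', h1, h2, h3⟩ := hJ5 x hx
          exact ⟨s, lf', by omega, h2, h3⟩
        · intro x lf' s h1 h2 h3
          rcases Nat.eq_or_lt_of_le h1 with h | h
          · left
            rw [h] at hct
            exact (bcomp_some_inj (h3.symm.trans hct)).1
          · exact hJ6 x lf' s h h2 h3
      · -- case (2b) : climb level
        subst hj2
        obtain ⟨Js, hJ1, hJ2, hJ3, hJ4, hJ5, hJ6⟩ :=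
          hIH j2 l2 rfl htk1 (fun s hs => hstep s (by omega))
            (fun s hs => hint s (by omega)) hc1
        refine ⟨Js, hJ1, ?_, ?_, ?_, ?_, ?_⟩
        · rw [hsum, hct, hc1, hJ2]
          have : ¬ ((l2 : ℕ) = 0 ∧ (some ⟨j2, lf⟩ : BComp n m) ≠ some ⟨j2, l2⟩) := by
            intro hcon
            omega
          simp only [CompWeight, if_neg this, zero_add]
        · intro l' hl'
          rcases Nat.eq_or_lt_of_le (show (lf : ℕ) ≤ (l' : ℕ) from hl') with h | h
          · have : l' = lf := Fin.ext h.symm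
            subst this
            exact ⟨t, le_rfl, htk, hacc⟩
          · obtain ⟨s, h1, h2, h3⟩ := hJ3 l' (by rw [Fin.le_def]; omega)
            exact ⟨s, by omega, h2, h3⟩
        · intro x hx l'
          obtain ⟨s, h1, h2, h3⟩ := hJ4 x hx l'
          exact ⟨s, by omega, h2, h3⟩
        · intro x hx
          obtain ⟨s, lf', h1, h2, h3⟩ := hJ5 x hx
          exact ⟨s, lf', by omega, h2, h3⟩
        · intro x lf' s h1 h2 h3
          rcases Nat.eq_or_lt_of_le h1 with h | h
          · left
            rw [h] at hct
            exact (bcomp_some_inj (h3.symm.trans hct)).1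
          · exact hJ6 x lf' s h h2 h3
      · -- case (2c) : enter next layer
        obtain ⟨Js, hJ1, hJ2, hJ3, hJ4, hJ5, hJ6⟩ :=
          hIH j2 l2 rfl htk1 (fun s hs => hstep s (by omega))
            (fun s hs => hint s (by omega)) hc1
        have hj2notin : j2 ∉ Js := fun hmem => by
          have := hJ1 j2 hmem
          omega
        refine ⟨insert j2 Js, ?_, ?_, ?_, ?_, ?_, ?_⟩
        · intro x hx
          rcases Finset.mem_insert.mp hx with h | h
          · subst h; omega
          · have := hJ1 x h; omega
        · rw [hsum, hct, hc1, hJ2, Finset.sum_insert hj2notin]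
          have hne : (some ⟨j, lf⟩ : BComp n m) ≠ some ⟨j2, l2⟩ := by
            intro hcon
            have := (bcomp_some_inj hcon).1
            subst this
            omega
          simp only [CompWeight]
          rw [if_pos ⟨hl2, hne⟩]
        · intro l' hl'
          have : l' = lf := by
            have h1 := l'.isLt
            have h2 : (lf : ℕ) ≤ (l' : ℕ) := hl'
            exact Fin.ext (by omega)
          subst this
          exact ⟨t, le_rfl, htk, hacc⟩
        · intro x hx l'
          rcases Finset.mem_insert.mp hx with h | h
          · subst h
            obtain ⟨s, h1, h2, h3⟩ := hJ3 l' (by rw [Fin.le_def]; omega)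
            exact ⟨s, by omega, h2, h3⟩
          · obtain ⟨s, h1, h2, h3⟩ := hJ4 x h l'
            exact ⟨s, by omega, h2, h3⟩
        · intro x hx
          rcases Finset.mem_insert.mp hx with h | h
          · subst h
            exact ⟨t + 1, l2, by omega, htk1, hc1⟩
          · obtain ⟨s, lf', h1, h2, h3⟩ := hJ5 x h
            exact ⟨s, lf', by omega, h2, h3⟩
        · intro x lf' s h1 h2 h3
          rcases Nat.eq_or_lt_of_le h1 with h | h
          · left
            rw [h] at hct
            exact (bcomp_some_inj (h3.symm.trans hct)).1
          · rcases hJ6 x lf' s h h2 h3 with h | h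
            · exact Or.inr (Finset.mem_insert.mpr (Or.inl h))
            · exact Or.inr (Finset.mem_insert.mpr (Or.inr h))

lemma frag_struct (G : ∀ j, GBA (Qs j) A (m j)) (rew : Fin n → ℕ)
    (q : ℕ → ∀ j, Qs j) (c : ℕ → BComp n m) (i k : ℕ) (hik : i < k)
    (hstep : ∀ s, i ≤ s → s < k → CompStep G (q s) (c s) (c (s + 1)))
    (hi : c i = none) (hk : c k = none)
    (hint : ∀ s, i < s → s < k → c s ≠ none) :
    ∃ Jset : Finset (Fin n),
      (∑ s ∈ Finset.Ico i k, CompWeight rew (c s) (c (s + 1))) = ∑ x ∈ Jset, rew x ∧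
      (∀ x ∈ Jset, ∀ l : Fin (m x), ∃ s, i ≤ s ∧ s < k ∧ q s x ∈ (G x).acc l) ∧
      (∀ x ∈ Jset, ∃ s lf, i ≤ s ∧ s < k ∧ c s = some ⟨x, lf⟩) ∧
      (∀ (x : Fin n) (lf : Fin (m x)) (s : ℕ), i ≤ s → s ≤ k → c s = some ⟨x, lf⟩ →
        x ∈ Jset) := by
  cases hc1 : c (i + 1) with
  | none =>
    have hk1 : k = i + 1 := by
      by_contra hne
      exact hint (i + 1) (by omega) (by omega) hc1
    refine ⟨∅, ?_, by simp, by simp, ?_⟩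
    · subst hk1
      rw [Finset.sum_Ico_eq_sum_range]
      simp [hi, hc1, CompWeight]
    · intro x lf s h1 h2 h3
      exfalso
      rcases Nat.eq_or_lt_of_le h1 with h | h
      · rw [← h, hi] at h3; exact nomatch h3
      · have hs : s = k := by omega
        rw [hs, hk] at h3; exact nomatch h3
  | some jl1 =>
    obtain ⟨j1, l1⟩ := jl1
    have hst := hstep i le_rfl hik
    rw [hi, hc1] at hst
    simp only [CompStep] at hst
    have hik1 : i + 1 < k := by
      rcases Nat.lt_or_ge (i + 1) k with h | h
      · exact h
      · exfalso
        have : i + 1 = k := by omega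
        rw [this, hk] at hc1; exact nomatch hc1
    obtain ⟨Js, hJ1, hJ2, hJ3, hJ4, hJ5, hJ6⟩ :=
      frag_aux G rew q c k hk (k - (i + 1)) (i + 1) j1 l1 rfl hik1
        (fun s hs => hstep s (by omega))
        (fun s hs h2 => hint s (by omega) h2) hc1
    have hj1notin : j1 ∉ Js := fun hmem => by have := hJ1 j1 hmem; omega
    have hsum0 : (∑ s ∈ Finset.Ico i k, CompWeight rew (c s) (c (s + 1)))
        = CompWeight rew (c i) (c (i + 1))
          + ∑ s ∈ Finset.Ico (i + 1) k, CompWeight rew (c s) (c (s + 1)) :=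
      Finset.sum_eq_sum_Ico_succ_bot (by omega) _
    refine ⟨insert j1 Js, ?_, ?_, ?_, ?_⟩
    · rw [hsum0, hi, hc1, hJ2, Finset.sum_insert hj1notin]
      have hne : (none : BComp n m) ≠ some ⟨j1, l1⟩ := by simp
      simp only [CompWeight]
      rw [if_pos ⟨hst, hne⟩]
    · intro x hx l
      rcases Finset.mem_insert.mp hx with h | h
      · subst h
        obtain ⟨s, h1, h2, h3⟩ := hJ3 l (by rw [Fin.le_def]; omega)
        exact ⟨s, by omega, h2, h3⟩
      · obtain ⟨s, h1, h2, h3⟩ := hJ4 x h l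
        exact ⟨s, by omega, h2, h3⟩
    · intro x hx
      rcases Finset.mem_insert.mp hx with h | h
      · subst h; exact ⟨i + 1, l1, by omega, hik1, hc1⟩
      · obtain ⟨s, lf, h1, h2, h3⟩ := hJ5 x h
        exact ⟨s, lf, by omega, h2, h3⟩
    · intro x lf s h1 h2 h3
      have hs1 : i + 1 ≤ s := by
        rcases Nat.eq_or_lt_of_le h1 with h | h
        · rw [← h, hi] at h3; exact nomatch h3
        · omega
      have hs2 : s < k := by
        rcases Nat.eq_or_lt_of_le h2 with h | h
        · rw [h, hk] at h3; exact nomatch h3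
        · exact h
      rcases hJ6 x lf s hs1 hs2 h3 with h | h
      · subst h; exact Finset.mem_insert_self _ _
      · exact Finset.mem_insert_of_mem h

lemma prod_frag {S : Type*} (T : LTS S A) (G : ∀ j, GBA (Qs j) A (m j))
    (rew : Fin n → ℕ) (ρ : ℕ → S × ((∀ j, Qs j) × BComp n m))
    (hρ : IsProdRun T (BAut G rew) ρ)
    {i k : ℕ} (hf : IsFragment (ProdAcc T (BAut G rew)) ρ i k) :
    ∃ Jset : Finset (Fin n),
      SegWeight (ProdStepW T (BWeight rew) ρ) i k = ∑ x ∈ Jset, rew x ∧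
      (∀ x ∈ Jset, ∀ l : Fin (m x), ∃ s, i ≤ s ∧ s < k ∧ (ρ s).2.1 x ∈ (G x).acc l) ∧
      (∀ x ∈ Jset, ∃ s lf, i ≤ s ∧ s < k ∧ (ρ s).2.2 = some ⟨x, lf⟩) ∧
      (∀ (x : Fin n) (lf : Fin (m x)) (s : ℕ), i ≤ s → s ≤ k →
        (ρ s).2.2 = some ⟨x, lf⟩ → x ∈ Jset) := by
  obtain ⟨hik, hiF, hkF, hintF⟩ := hf
  obtain ⟨Js, h1, h2, h3, h4⟩ := frag_struct G rew (fun t => (ρ t).2.1)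
    (fun t => (ρ t).2.2) i k hik (fun s _ _ => (hρ.2 s).2.2) hiF hkF
    (fun s hs1 hs2 he => hintF s hs1 hs2 he)
  exact ⟨Js, h1, h2, h3, h4⟩

lemma soundness {S : Type*} (T : LTS S A) (G : ∀ j, GBA (Qs j) A (m j))
    (rew : Fin n → ℕ) (ρ : ℕ → S × ((∀ j, Qs j) × BComp n m)) (cv : ℕ)
    (h1 : IsProdRun T (BAut G rew) ρ)
    (h3 : RunRewardIs (ProdAcc T (BAut G rew)) ρ (ProdStepW T (BWeight rew) ρ) cv) :
    T.IsTrace (fun t => (ρ t).1) ∧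
    cv ≤ TraceRew T G rew (fun t => (ρ t).1) := by
  have htrace : T.IsTrace (fun t => (ρ t).1) :=
    ⟨congrArg Prod.fst h1.1, fun i => (h1.2 i).1⟩
  refine ⟨htrace, ?_⟩
  have hch : ∀ N : ℕ, ∃ d : ℕ × ℕ × Finset (Fin n),
      N ≤ d.1 ∧ (∑ x ∈ d.2.2, rew x) = cv ∧
      (∀ x ∈ d.2.2, ∀ l : Fin (m x), ∃ s, d.1 ≤ s ∧ s < d.2.1 ∧
        (ρ s).2.1 x ∈ (G x).acc l) := by
    intro N
    obtain ⟨i, k, hNi, hfrag, hw⟩ := h3.1 N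
    obtain ⟨Js, hw2, hacc, -, -⟩ := prod_frag T G rew ρ h1 hfrag
    exact ⟨(i, k, Js), hNi, by rw [← hw2]; exact hw, hacc⟩
  choose dat hd1 hd2 hd3 using hch
  obtain ⟨J0, hJ0'⟩ := Finite.exists_infinite_fiber (fun N => (dat N).2.2)
  have hJ0 := Set.infinite_coe_iff.mp hJ0'
  have hlang : ∀ j ∈ J0, T.word (fun t => (ρ t).1) ∈ (G j).Lang := by
    intro j hj
    refine ⟨fun t => (ρ t).2.1 j, ⟨congrArg (fun p => p.2.1 j) h1.1,
      fun i => (h1.2 i).2.1 j⟩, ?_⟩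
    intro l N
    obtain ⟨b, hb, hNb⟩ := hJ0.exists_gt N
    have hfib : (dat b).2.2 = J0 := hb
    rw [← hfib] at hj
    obtain ⟨s, hs1, hs2, hs3⟩ := hd3 b j hj l
    exact ⟨s, by have := hd1 b; omega, hs3⟩
  obtain ⟨b0, hb0⟩ := hJ0.nonempty
  have hfib0 : (dat b0).2.2 = J0 := hb0
  have hcveq : cv = ∑ x ∈ J0, rew x := by rw [← hfib0]; exact (hd2 b0).symm
  calc cv = ∑ x ∈ J0, rew x := hcveq
    _ = ∑ x ∈ J0, (if T.word (fun t => (ρ t).1) ∈ (G x).Lang then rew x else 0) :=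
        (Finset.sum_congr rfl (fun x hx => by rw [if_pos (hlang x hx)])).symm
    _ ≤ ∑ x : Fin n, (if T.word (fun t => (ρ t).1) ∈ (G x).Lang then rew x else 0) :=
        Finset.sum_le_sum_of_subset (Finset.subset_univ _)
    _ = TraceRew T G rew (fun t => (ρ t).1) := by
        rw [TraceRew]

open Classical in
/-- Scheduler for the component automaton: climb through the levels of the
current layer (advancing exactly when the current GBA state is accepting),
then move to the next layer of `J`, and back to `none` after the last one. -/
noncomputable def nextComp (G : ∀ j, GBA (Qs j) A (m j)) (hm : ∀ j, 0 < m j)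
    (J : Finset (Fin n)) (qt : ∀ j, Qs j) : BComp n m → BComp n m
  | none => if h : J.Nonempty then some ⟨J.min' h, ⟨0, hm _⟩⟩ else none
  | some jl =>
      if qt jl.1 ∈ (G jl.1).acc jl.2 then
        if h : (jl.2 : ℕ) + 1 < m jl.1 then some ⟨jl.1, ⟨(jl.2 : ℕ) + 1, h⟩⟩
        else if h2 : (J.filter (fun x => jl.1 < x)).Nonempty
          then some ⟨(J.filter (fun x => jl.1 < x)).min' h2, ⟨0, hm _⟩⟩
          else none
      else some jl

/-- Where the scheduler goes upon completing layer `j`. -/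
noncomputable def layerExit (hm : ∀ j, 0 < m j) (J : Finset (Fin n)) (j : Fin n) :
    BComp n m :=
  if h2 : (J.filter (fun x => j < x)).Nonempty
    then some ⟨(J.filter (fun x => j < x)).min' h2, ⟨0, hm _⟩⟩
    else none

noncomputable def compSeq (G : ∀ j, GBA (Qs j) A (m j)) (hm : ∀ j, 0 < m j)
    (J : Finset (Fin n)) (q : ℕ → ∀ j, Qs j) : ℕ → BComp n m
  | 0 => none
  | t + 1 => nextComp G hm J (q t) (compSeq G hm J q t)

section Machine

variable (G : ∀ j, GBA (Qs j) A (m j)) (hm : ∀ j, 0 < m j)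
  (J : Finset (Fin n)) (q : ℕ → ∀ j, Qs j)

lemma compSeq_succ (t : ℕ) :
    compSeq G hm J q (t + 1) = nextComp G hm J (q t) (compSeq G hm J q t) := rfl

lemma nextComp_none (qt : ∀ j, Qs j) :
    nextComp G hm J qt none
      = if h : J.Nonempty then some ⟨J.min' h, ⟨0, hm _⟩⟩ else none := rfl

lemma nextComp_some (qt : ∀ j, Qs j) (j : Fin n) (l : Fin (m j)) :
    nextComp G hm J qt (some ⟨j, l⟩)
      = if qt j ∈ (G j).acc l then
          if h : (l : ℕ) + 1 < m j then some ⟨j, ⟨(l : ℕ) + 1, h⟩⟩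
          else if h2 : (J.filter (fun x => j < x)).Nonempty
            then some ⟨(J.filter (fun x => j < x)).min' h2, ⟨0, hm _⟩⟩
            else none
        else some ⟨j, l⟩ := rfl

lemma compSeq_step (t : ℕ) :
    CompStep G (q t) (compSeq G hm J q t) (compSeq G hm J q (t + 1)) := by
  rw [compSeq_succ]
  cases hc : compSeq G hm J q t with
  | none =>
    rw [nextComp_none]
    split
    · simp [CompStep]
    · simp [CompStep]
  | some jl =>
    obtain ⟨j, l⟩ := jl
    rw [nextComp_some]
    by_cases ha : q t j ∈ (G j).acc l
    · rw [if_pos ha]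
      by_cases h2 : (l : ℕ) + 1 < m j
      · rw [dif_pos h2]
        exact Or.inr (Or.inl ⟨rfl, rfl, ha⟩)
      · rw [dif_neg h2]
        by_cases h3 : (J.filter (fun x => j < x)).Nonempty
        · rw [dif_pos h3]
          refine Or.inr (Or.inr ⟨?_, ?_, rfl, ha⟩)
          · exact (Finset.mem_filter.mp (Finset.min'_mem _ h3)).2
          · show (l : ℕ) + 1 = m j
            have := l.isLt; omega
        · rw [dif_neg h3]
          refine ⟨?_, ha⟩
          show (l : ℕ) + 1 = m j
          have := l.isLt; omega
    · rw [if_neg ha]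
      exact Or.inl ⟨rfl, rfl, ha⟩

lemma compSeq_mem {t : ℕ} {j : Fin n} {l : Fin (m j)}
    (h : compSeq G hm J q t = some ⟨j, l⟩) : j ∈ J := by
  induction t generalizing j l with
  | zero => exact absurd h (by simp [compSeq])
  | succ t IH =>
    rw [compSeq_succ] at h
    cases hc : compSeq G hm J q t with
    | none =>
      rw [hc, nextComp_none] at h
      split at h
      · obtain ⟨h1, -⟩ := bcomp_some_inj h
        rw [← h1]
        exact Finset.min'_mem _ _
      · exact nomatch h
    | some jl =>
      obtain ⟨j0, l0⟩ := jl
      rw [hc, nextComp_some] at h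
      by_cases ha : q t j0 ∈ (G j0).acc l0
      · rw [if_pos ha] at h
        by_cases h2 : (l0 : ℕ) + 1 < m j0
        · rw [dif_pos h2] at h
          obtain ⟨h1, -⟩ := bcomp_some_inj h
          rw [← h1]
          exact IH hc
        · rw [dif_neg h2] at h
          by_cases h3 : (J.filter (fun x => j0 < x)).Nonempty
          · rw [dif_pos h3] at h
            obtain ⟨h1, -⟩ := bcomp_some_inj h
            rw [← h1]
            exact (Finset.mem_filter.mp (Finset.min'_mem _ h3)).1
          · rw [dif_neg h3] at h
            exact nomatch h
      · rw [if_neg ha] at h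
        obtain ⟨h1, -⟩ := bcomp_some_inj h
        rw [← h1]
        exact IH hc

variable (haccq : ∀ j ∈ J, ∀ (l : Fin (m j)) (N : ℕ), ∃ s, N ≤ s ∧ q s j ∈ (G j).acc l)

include haccq in
lemma compSeq_wait {t : ℕ} {j : Fin n} {l : Fin (m j)}
    (hc : compSeq G hm J q t = some ⟨j, l⟩) (hj : j ∈ J) :
    ∃ s, t ≤ s ∧ (∀ u, t ≤ u → u ≤ s → compSeq G hm J q u = some ⟨j, l⟩) ∧
      q s j ∈ (G j).acc l := by
  obtain ⟨s0, hs0, hs0acc⟩ := haccq j hj l t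
  have hex : ∃ s, t ≤ s ∧ q s j ∈ (G j).acc l := ⟨s0, hs0, hs0acc⟩
  have hspec := Nat.find_spec hex
  have key : ∀ d u, u = t + d → u ≤ Nat.find hex → compSeq G hm J q u = some ⟨j, l⟩ := by
    intro d
    induction d with
    | zero =>
      intro u hu _
      have hut : u = t := by omega
      rw [hut]
      exact hc
    | succ d IH =>
      intro u hu hus
      have hprev : compSeq G hm J q (t + d) = some ⟨j, l⟩ := IH (t + d) rfl (by omega)
      have hna : q (t + d) j ∉ (G j).acc l := by
        intro hcon
        exact Nat.find_min hex (show t + d < Nat.find hex by omega) ⟨by omega, hcon⟩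
      have hu' : u = (t + d) + 1 := by omega
      rw [hu', compSeq_succ, hprev, nextComp_some, if_neg hna]
  exact ⟨Nat.find hex, hspec.1, fun u h1 h2 => key (u - t) u (by omega) h2, hspec.2⟩

include haccq in
lemma compSeq_climb :
    ∀ d {t : ℕ} {j : Fin n} {l : Fin (m j)}, m j - (l : ℕ) = d →
    compSeq G hm J q t = some ⟨j, l⟩ → j ∈ J →
    ∃ s, t < s ∧ (∀ u, t ≤ u → u < s → ∃ l', compSeq G hm J q u = some ⟨j, l'⟩) ∧
      compSeq G hm J q s = layerExit hm J j := by
  intro d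
  induction d using Nat.strong_induction_on with
  | _ d IH =>
    intro t j l hd hc hj
    obtain ⟨s, hts, hconst, haccs⟩ := compSeq_wait G hm J q haccq hc hj
    have hnext : compSeq G hm J q (s + 1)
        = nextComp G hm J (q s) (some ⟨j, l⟩) := by
      rw [compSeq_succ, hconst s hts le_rfl]
    by_cases h2 : (l : ℕ) + 1 < m j
    · have hc1 : compSeq G hm J q (s + 1) = some ⟨j, ⟨(l : ℕ) + 1, h2⟩⟩ := by
        rw [hnext, nextComp_some, if_pos haccs, dif_pos h2]
      obtain ⟨s', hs', hconst', hexit⟩ :=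
        IH (m j - ((l : ℕ) + 1)) (by omega) rfl hc1 hj
      refine ⟨s', by omega, ?_, hexit⟩
      intro u h1 h3
      rcases Nat.lt_or_ge u (s + 1) with h | h
      · exact ⟨l, hconst u h1 (by omega)⟩
      · exact hconst' u h h3
    · refine ⟨s + 1, by omega, fun u h1 h3 => ⟨l, hconst u h1 (by omega)⟩, ?_⟩
      rw [hnext, nextComp_some, if_pos haccs, dif_neg h2]
      rfl

include haccq in
lemma compSeq_traverse :
    ∀ d {t : ℕ} {j : Fin n} {l : Fin (m j)} {j' : Fin n}, (j' : ℕ) - (j : ℕ) = d →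
    compSeq G hm J q t = some ⟨j, l⟩ → j ∈ J → j' ∈ J → j ≤ j' →
    ∃ s, ∃ l' : Fin (m j'), t ≤ s ∧ compSeq G hm J q s = some ⟨j', l'⟩ ∧
      ∀ u, t ≤ u → u ≤ s → compSeq G hm J q u ≠ none := by
  intro d
  induction d using Nat.strong_induction_on with
  | _ d IH =>
    intro t j l j' hd hc hj hj' hle
    rcases eq_or_lt_of_le hle with heq | hlt
    · subst heq
      refine ⟨t, l, le_rfl, hc, fun u h1 h2 => ?_⟩
      have : u = t := by omega
      rw [this, hc]
      simp
    · have hfil : (J.filter (fun x => j < x)).Nonempty :=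
        ⟨j', Finset.mem_filter.mpr ⟨hj', hlt⟩⟩
      obtain ⟨s0, hts0, hconst, hexit⟩ :=
        compSeq_climb G hm J q haccq (m j - (l : ℕ)) rfl hc hj
      rw [layerExit, dif_pos hfil] at hexit
      have hjnJ : (J.filter (fun x => j < x)).min' hfil ∈ J :=
        (Finset.mem_filter.mp (Finset.min'_mem _ hfil)).1
      have hjjn : j < (J.filter (fun x => j < x)).min' hfil :=
        (Finset.mem_filter.mp (Finset.min'_mem _ hfil)).2
      have hjnle : (J.filter (fun x => j < x)).min' hfil ≤ j' :=
        Finset.min'_le _ _ (Finset.mem_filter.mpr ⟨hj', hlt⟩)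
      have hjjn' : (j : ℕ) < ((J.filter (fun x => j < x)).min' hfil : ℕ) := hjjn
      have hjnle' : (((J.filter (fun x => j < x)).min' hfil : Fin n) : ℕ) ≤ (j' : ℕ) := hjnle
      have hlt' : (j : ℕ) < (j' : ℕ) := hlt
      obtain ⟨s, l', hs, hcs, hnone⟩ :=
        IH ((j' : ℕ) - (((J.filter (fun x => j < x)).min' hfil : Fin n) : ℕ))
          (by omega) rfl hexit hjnJ hj' hjnle
      refine ⟨s, l', by omega, hcs, ?_⟩
      intro u h1 h2
      rcases Nat.lt_or_ge u s0 with h | h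
      · obtain ⟨l'', hl''⟩ := hconst u h1 h
        rw [hl'']
        simp
      · exact hnone u h h2

include haccq in
lemma compSeq_none_aux :
    ∀ d {t : ℕ} {j : Fin n} {l : Fin (m j)}, n - (j : ℕ) = d →
    compSeq G hm J q t = some ⟨j, l⟩ →
    ∃ s, t ≤ s ∧ compSeq G hm J q s = none := by
  intro d
  induction d using Nat.strong_induction_on with
  | _ d IH =>
    intro t j l hd hc
    have hj := compSeq_mem G hm J q hc
    obtain ⟨s0, hts0, hconst, hexit⟩ :=
      compSeq_climb G hm J q haccq (m j - (l : ℕ)) rfl hc hj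
    by_cases hfil : (J.filter (fun x => j < x)).Nonempty
    · rw [layerExit, dif_pos hfil] at hexit
      have hjjn : (j : ℕ) < ((J.filter (fun x => j < x)).min' hfil : ℕ) :=
        (Finset.mem_filter.mp (Finset.min'_mem _ hfil)).2
      have hlt := ((J.filter (fun x => j < x)).min' hfil).isLt
      obtain ⟨s, h1, h2⟩ :=
        IH (n - (((J.filter (fun x => j < x)).min' hfil : Fin n) : ℕ))
          (by omega) rfl hexit
      exact ⟨s, by omega, h2⟩
    · rw [layerExit, dif_neg hfil] at hexit
      exact ⟨s0, by omega, hexit⟩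

include haccq in
lemma compSeq_none (t : ℕ) : ∃ s, t ≤ s ∧ compSeq G hm J q s = none := by
  cases hc : compSeq G hm J q t with
  | none => exact ⟨t, le_rfl, hc⟩
  | some jl =>
    obtain ⟨s, h1, h2⟩ := compSeq_none_aux G hm J q haccq (n - (jl.1 : ℕ)) rfl
      (show compSeq G hm J q t = some ⟨jl.1, jl.2⟩ from hc)
    exact ⟨s, h1, h2⟩

end Machine

lemma completeness {S : Type*} (T : LTS S A) (hm : ∀ j, 0 < m j)
    (G : ∀ j, GBA (Qs j) A (m j)) (hnb : ∀ j, (G j).NonBlocking)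
    (rew : Fin n → ℕ) (τ : ℕ → S) (hτ : T.IsTrace τ) :
    ∃ ρ, IsProdRun T (BAut G rew) ρ ∧ IsProdAccepting T (BAut G rew) ρ ∧
      RunRewardIs (ProdAcc T (BAut G rew)) ρ (ProdStepW T (BWeight rew) ρ)
        (TraceRew T G rew τ) := by
  classical
  have hruns : ∀ j : Fin n, ∃ r : ℕ → Qs j,
      (G j).IsRun (T.word τ) r ∧ ((T.word τ) ∈ (G j).Lang → (G j).IsAccepting r) := by
    intro j
    by_cases h : (T.word τ) ∈ (G j).Lang
    · obtain ⟨r, hr1, hr2⟩ := h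
      exact ⟨r, hr1, fun _ => hr2⟩
    · obtain ⟨r, hr⟩ := gba_exists_run (G j) (hnb j) (T.word τ)
      exact ⟨r, hr, fun hc => absurd hc h⟩
  choose r hr1 hr2 using hruns
  set J : Finset (Fin n) := Finset.univ.filter (fun j => (T.word τ) ∈ (G j).Lang)
    with hJ
  set q : ℕ → ∀ j, Qs j := fun t j => r j t with hq
  have haccq : ∀ j ∈ J, ∀ (l : Fin (m j)) (N : ℕ), ∃ s, N ≤ s ∧ q s j ∈ (G j).acc l := by
    intro j hj l N
    exact hr2 j (Finset.mem_filter.mp hj).2 l N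
  set ρ : ℕ → S × ((∀ j, Qs j) × BComp n m) :=
    fun t => (τ t, q t, compSeq G hm J q t) with hρ
  have hrun : IsProdRun T (BAut G rew) ρ := by
    constructor
    · show (τ 0, q 0, compSeq G hm J q 0) = (T.init, fun j => (G j).init, none)
      rw [hτ.1]
      have h2 : q 0 = fun j => (G j).init := funext fun j => (hr1 j).1
      rw [h2]
      rfl
    · intro i
      exact ⟨hτ.2 i, fun j => (hr1 j).2 i, compSeq_step G hm J q i⟩
  have haccrun : IsProdAccepting T (BAut G rew) ρ := by
    intro N
    obtain ⟨s, h1, h2⟩ := compSeq_none G hm J q haccq N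
    exact ⟨s, h1, h2⟩
  have hTR : TraceRew T G rew τ = ∑ x ∈ J, rew x := by
    rw [hJ, Finset.sum_filter, TraceRew]
  have hfragJ : ∀ i k, IsFragment (ProdAcc T (BAut G rew)) ρ i k →
      SegWeight (ProdStepW T (BWeight rew) ρ) i k = ∑ x ∈ J, rew x := by
    intro i k hf
    obtain ⟨Js, hw2, -, hvis, hall⟩ := prod_frag T G rew ρ hrun hf
    have hsub : Js ⊆ J := by
      intro x hx
      obtain ⟨s, lf, -, -, h3⟩ := hvis x hx
      exact compSeq_mem G hm J q h3
    have hsub2 : J ⊆ Js := by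
      intro j' hj'
      obtain ⟨hik, hiF, hkF, hintF⟩ := hf
      have hiF' : compSeq G hm J q i = none := hiF
      have hkF' : compSeq G hm J q k = none := hkF
      have hJne : J.Nonempty := ⟨j', hj'⟩
      have hc1 : compSeq G hm J q (i + 1) = some ⟨J.min' hJne, ⟨0, hm _⟩⟩ := by
        rw [compSeq_succ, hiF', nextComp_none, dif_pos hJne]
      have hik1 : i + 1 < k := by
        rcases Nat.lt_or_ge (i + 1) k with h | h
        · exact h
        · exfalso
          have : i + 1 = k := by omega
          rw [this, hkF'] at hc1
          exact nomatch hc1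
      obtain ⟨s, l', hs, hcs, hnone⟩ :=
        compSeq_traverse G hm J q haccq ((j' : ℕ) - ((J.min' hJne : Fin n) : ℕ)) rfl
          hc1 (Finset.min'_mem _ _) hj' (Finset.min'_le _ _ hj')
      have hsk : s < k := by
        rcases Nat.lt_or_ge s k with h | h
        · exact h
        · exact absurd hkF' (hnone k (by omega) (by omega))
      exact hall j' l' s (by omega) (by omega) hcs
    rw [hw2, Finset.Subset.antisymm hsub hsub2]
  refine ⟨ρ, hrun, haccrun, ?_, ?_⟩
  · intro N
    obtain ⟨i, hNi, hci⟩ := compSeq_none G hm J q haccq N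
    have hex2 : ∃ s, i + 1 ≤ s ∧ compSeq G hm J q s = none :=
      compSeq_none G hm J q haccq (i + 1)
    have hkspec := Nat.find_spec hex2
    have hfrag : IsFragment (ProdAcc T (BAut G rew)) ρ i (Nat.find hex2) := by
      refine ⟨by have := hkspec.1; omega, hci, hkspec.2, ?_⟩
      intro u h1 h2 hu
      exact Nat.find_min hex2 h2 ⟨by omega, hu⟩
    refine ⟨i, Nat.find hex2, hNi, hfrag, ?_⟩
    rw [hfragJ _ _ hfrag, hTR]
  · intro v hv
    rw [hTR] at hv
    refine ⟨0, fun i k _ hf => ?_⟩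
    rw [hfragJ i k hf]
    omega

lemma frag_bound {S : Type*} (T : LTS S A) (G : ∀ j, GBA (Qs j) A (m j))
    (rew : Fin n → ℕ) (ρ : ℕ → S × ((∀ j, Qs j) × BComp n m))
    (hρ : IsProdRun T (BAut G rew) ρ)
    {i k : ℕ} (hf : IsFragment (ProdAcc T (BAut G rew)) ρ i k) :
    SegWeight (ProdStepW T (BWeight rew) ρ) i k ≤ ∑ x : Fin n, rew x := by
  obtain ⟨Js, hw, -, -, -⟩ := prod_frag T G rew ρ hρ hf
  rw [hw]
  exact Finset.sum_le_sum_of_subset (Finset.subset_univ _)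

lemma traceRew_le {S : Type*} (T : LTS S A) (G : ∀ j, GBA (Qs j) A (m j))
    (rew : Fin n → ℕ) (τ : ℕ → S) : TraceRew T G rew τ ≤ ∑ x : Fin n, rew x := by
  unfold TraceRew
  apply Finset.sum_le_sum
  intro i _
  split_ifs
  · exact le_rfl
  · exact Nat.zero_le _

lemma pumping {S : Type*} [Finite S] [∀ j, Finite (Qs j)] (T : LTS S A)
    (G : ∀ j, GBA (Qs j) A (m j)) (rew : Fin n → ℕ)
    (ρ : ℕ → S × ((∀ j, Qs j) × BComp n m)) (c : ℕ)
    (h1 : IsProdRun T (BAut G rew) ρ)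
    (h3 : RunRewardIs (ProdAcc T (BAut G rew)) ρ (ProdStepW T (BWeight rew) ρ) c) :
    ∃ ρ', IsProdRun T (BAut G rew) ρ' ∧ IsProdAccepting T (BAut G rew) ρ' ∧
      IsPrefixSuffix (ProdAcc T (BAut G rew)) ρ' ∧
      RunRewardIs (ProdAcc T (BAut G rew)) ρ' (ProdStepW T (BWeight rew) ρ') c := by
  classical
  set F := ProdAcc T (BAut G rew) with hF
  set SW := fun (σ : ℕ → S × ((∀ j, Qs j) × BComp n m)) => ProdStepW T (BWeight rew) σ
    with hSW
  have swc : ∀ (σ1 σ2 : ℕ → S × ((∀ j, Qs j) × BComp n m)) (t s : ℕ),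
      σ1 t = σ2 s → σ1 (t + 1) = σ2 (s + 1) → SW σ1 t = SW σ2 s := by
    intro σ1 σ2 t s ha hb
    simp only [hSW, ProdStepW, ha, hb]
  have hNv : ∀ v ∈ Finset.Icc (c + 1) (∑ x : Fin n, rew x), ∃ N, ∀ i k, N ≤ i →
      IsFragment F ρ i k → SegWeight (SW ρ) i k ≠ v := by
    intro v hv
    exact h3.2 v (by have := (Finset.mem_Icc.mp hv).1; omega)
  choose Nv hNv2 using hNv
  set Ns : ℕ := ((Finset.Icc (c + 1) (∑ x : Fin n, rew x)).attach.sup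
    (fun v => Nv v.1 v.2)) with hNsdef
  have hNsbig : ∀ i k, Ns ≤ i → IsFragment F ρ i k → SegWeight (SW ρ) i k ≤ c := by
    intro i k hi hf
    by_contra hgt
    push_neg at hgt
    have hub := frag_bound T G rew ρ h1 hf
    have hmem : SegWeight (SW ρ) i k ∈ Finset.Icc (c + 1) (∑ x : Fin n, rew x) :=
      Finset.mem_Icc.mpr ⟨by omega, hub⟩
    have hle : Nv _ hmem ≤ Ns :=
      Finset.le_sup (f := fun v : {x // x ∈ Finset.Icc (c + 1) (∑ x : Fin n, rew x)} =>
        Nv v.1 v.2) (Finset.mem_attach _ ⟨_, hmem⟩)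
    exact hNv2 _ hmem i k (by omega) hf rfl
  have hnext : ∀ N, ∃ ik : ℕ × ℕ, N ≤ ik.1 ∧ IsFragment F ρ ik.1 ik.2 ∧
      SegWeight (SW ρ) ik.1 ik.2 = c := by
    intro N
    obtain ⟨i, k, h⟩ := h3.1 N
    exact ⟨(i, k), h⟩
  choose nxt hn1 hn2 hn3 using hnext
  set g : ℕ → ℕ × ℕ := fun t => Nat.rec (nxt Ns) (fun _ p => nxt (p.1 + 1)) t with hg
  have hg0 : Ns ≤ (g 0).1 := hn1 Ns
  have hgsucc : ∀ t, (g t).1 + 1 ≤ (g (t + 1)).1 := fun t => hn1 _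
  have hgmono : StrictMono (fun t => (g t).1) :=
    strictMono_nat_of_lt_succ (fun t => by have := hgsucc t; omega)
  have hgNs : ∀ t, Ns ≤ (g t).1 := by
    intro t
    induction t with
    | zero => exact hg0
    | succ t IH => have := hgsucc t; omega
  have hgfrag : ∀ t, IsFragment F ρ (g t).1 (g t).2 := by
    intro t
    cases t with
    | zero => exact hn2 Ns
    | succ t => exact hn2 _
  have hgw : ∀ t, SegWeight (SW ρ) (g t).1 (g t).2 = c := by
    intro t
    cases t with
    | zero => exact hn3 Ns
    | succ t => exact hn3 _
  obtain ⟨a, b, hab, heq⟩ : ∃ a b, a < b ∧ ρ (g a).1 = ρ (g b).1 := by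
    obtain ⟨a, b, hne, heq⟩ := Finite.exists_ne_map_eq_of_infinite (fun t => ρ (g t).1)
    rcases lt_or_gt_of_ne hne with h | h
    · exact ⟨a, b, h, heq⟩
    · exact ⟨b, a, h, heq.symm⟩
  set ia := (g a).1 with hia0
  set ib := (g b).1 with hib0
  set per := ib - ia with hper0
  have hiaib : ia < ib := hgmono hab
  have hper : 0 < per := by omega
  set ka := (g a).2 with hka0
  obtain ⟨hiaka, hiaF, hkaF, hintka⟩ := hgfrag a
  have hibF : ρ ib ∈ F := (hgfrag b).2.1
  have hwa : SegWeight (SW ρ) ia ka = c := hgw a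
  have hkaib : ka ≤ ib := by
    by_contra hcon
    push_neg at hcon
    exact (hintka ib hiaib hcon) hibF
  have hiaNs : Ns ≤ ia := hgNs a
  set ρ' : ℕ → S × ((∀ j, Qs j) × BComp n m) :=
    fun t => if t < ia then ρ t else ρ (ia + (t - ia) % per) with hρ'
  have e_ge : ∀ t, ia ≤ t → ρ' t = ρ (ia + (t - ia) % per) := by
    intro t ht
    simp only [hρ']
    rw [if_neg (by omega)]
  have e3 : ∀ t, t ≤ ib → ρ' t = ρ t := by
    intro t ht
    rcases Nat.lt_or_ge t ia with h | h
    · simp only [hρ']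
      rw [if_pos h]
    · rw [e_ge t h]
      rcases Nat.lt_or_ge (t - ia) per with h2 | h2
      · rw [Nat.mod_eq_of_lt h2]
        congr 1
        omega
      · have ht2 : t = ib := by omega
        have hx : (t - ia) = per := by omega
        rw [hx, Nat.mod_self, ht2]
        simpa using heq
  have e4 : ∀ t, ia ≤ t → ρ' (t + per) = ρ' t := by
    intro t ht
    rw [e_ge _ (by omega), e_ge t ht]
    have hx : t + per - ia = (t - ia) + per := by omega
    rw [hx, Nat.add_mod_right]
  have e5 : ∀ t, ia ≤ t → ∀ d, ρ' (t + d * per) = ρ' t := by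
    intro t ht d
    induction d with
    | zero => simp
    | succ d IH =>
      have hx : t + (d + 1) * per = (t + d * per) + per := by ring
      rw [hx, e4 _ (by omega), IH]
  have e6 : ∀ t, ia ≤ t → ∃ t' dd, ia ≤ t' ∧ t' < ib ∧ t = t' + dd * per := by
    intro t ht
    refine ⟨ia + (t - ia) % per, (t - ia) / per, by omega, ?_, ?_⟩
    · have := Nat.mod_lt (t - ia) hper
      omega
    · have h1 := Nat.mod_add_div (t - ia) per
      have h2 : (t - ia) / per * per = per * ((t - ia) / per) := Nat.mul_comm _ _
      omega
  have hshift : ∀ x, ia ≤ x → x ≤ ib → ∀ dd, ρ' (x + dd * per) = ρ x := by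
    intro x hx1 hx2 dd
    rw [e5 x hx1 dd, e3 x hx2]
  have ecorr : ∀ t, ia ≤ t → ∃ s, ia ≤ s ∧ s < ib ∧ ρ' t = ρ s ∧ ρ' (t + 1) = ρ (s + 1) := by
    intro t ht
    obtain ⟨t', dd, hx1, hx2, hx3⟩ := e6 t ht
    refine ⟨t', hx1, hx2, ?_, ?_⟩
    · rw [hx3, e5 t' hx1 dd, e3 t' (by omega)]
    · have hy : t + 1 = (t' + 1) + dd * per := by omega
      rw [hy, e5 (t' + 1) (by omega) dd, e3 (t' + 1) (by omega)]
  have hrun' : IsProdRun T (BAut G rew) ρ' := by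
    constructor
    · rw [e3 0 (by omega)]
      exact h1.1
    · intro t
      rcases Nat.lt_or_ge t ia with h | h
      · rw [e3 t (by omega), e3 (t + 1) (by omega)]
        exact h1.2 t
      · obtain ⟨s, -, -, hx, hy⟩ := ecorr t h
        rw [hx, hy]
        exact h1.2 s
  have hNmul : ∀ N : ℕ, N ≤ ia + N * per := by
    intro N
    have := Nat.le_mul_of_pos_right N hper
    omega
  have hacc' : IsProdAccepting T (BAut G rew) ρ' := by
    intro N
    refine ⟨ia + N * per, hNmul N, ?_⟩
    show ρ' (ia + N * per) ∈ F
    rw [hshift ia le_rfl (by omega) N]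
    exact hiaF
  have hps : IsPrefixSuffix F ρ' :=
    ⟨ia, per, hper, by rw [e3 ia (by omega)]; exact hiaF, fun i hi => e4 i hi⟩
  have part1 : ∀ N, ∃ i k, N ≤ i ∧ IsFragment F ρ' i k ∧ SegWeight (SW ρ') i k = c := by
    intro N
    refine ⟨ia + N * per, ka + N * per, hNmul N, ⟨by omega, ?_, ?_, ?_⟩, ?_⟩
    · rw [hshift ia le_rfl (by omega) N]
      exact hiaF
    · rw [hshift ka (by omega) hkaib N]
      exact hkaF
    · intro u hu1 hu2
      have hx : u = (u - N * per) + N * per := by omega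
      rw [hx, hshift (u - N * per) (by omega) (by omega) N]
      exact hintka _ (by omega) (by omega)
    · rw [← hwa]
      simp only [SegWeight]
      rw [Finset.sum_Ico_eq_sum_range, Finset.sum_Ico_eq_sum_range]
      have hlen : ka + N * per - (ia + N * per) = ka - ia := by omega
      rw [hlen]
      apply Finset.sum_congr rfl
      intro u hu
      have hu' : u < ka - ia := Finset.mem_range.mp hu
      apply swc
      · have hx : ia + N * per + u = (ia + u) + N * per := by omega
        rw [hx, hshift (ia + u) (by omega) (by omega) N]
      · have hx : ia + N * per + u + 1 = (ia + u + 1) + N * per := by omega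
        rw [hx, hshift (ia + u + 1) (by omega) (by omega) N]
  have part2 : ∀ v, c < v → ∃ N, ∀ i k, N ≤ i → IsFragment F ρ' i k →
      SegWeight (SW ρ') i k ≠ v := by
    intro v hv
    refine ⟨ia, fun i k hi hf => ?_⟩
    obtain ⟨hik, hiF2, hkF2, hint2⟩ := hf
    obtain ⟨i', dd, hi1, hi2, hi3⟩ := e6 i hi
    have hsh : ∀ u, ρ' (i + u) = ρ' (i' + u) := by
      intro u
      have hx : i + u = (i' + u) + dd * per := by omega
      rw [hx, e5 (i' + u) (by omega) dd]
    set k' := i' + (k - i) with hk'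
    have hkib : k' ≤ ib := by
      by_contra hcon
      push_neg at hcon
      have hmem : ρ' (i + (ib - i')) ∈ F := by
        have hx : i' + (ib - i') = ib := by omega
        rw [hsh (ib - i'), hx, e3 ib le_rfl]
        exact hibF
      exact hint2 (i + (ib - i')) (by omega) (by omega) hmem
    have hcorr : ∀ u, u ≤ k - i → ρ (i' + u) = ρ' (i + u) := by
      intro u hu
      rw [hsh u, e3 (i' + u) (by omega)]
    have hfr : IsFragment F ρ i' k' := by
      refine ⟨by omega, ?_, ?_, ?_⟩
      · have hx := hcorr 0 (by omega)
        simp only [Nat.add_zero] at hx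
        rw [hx]
        exact hiF2
      · have hx := hcorr (k - i) (by omega)
        have hy : i + (k - i) = k := by omega
        rw [hy] at hx
        show ρ (i' + (k - i)) ∈ F
        rw [hx]
        exact hkF2
      · intro u h1 h2
        have hu : u = i' + (u - i') := by omega
        have hx := hcorr (u - i') (by omega)
        rw [hu, hx]
        exact hint2 (i + (u - i')) (by omega) (by omega)
    have hfw : SegWeight (SW ρ) i' k' = SegWeight (SW ρ') i k := by
      simp only [SegWeight]
      rw [Finset.sum_Ico_eq_sum_range, Finset.sum_Ico_eq_sum_range]
      have hx : k' - i' = k - i := by omega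
      rw [hx]
      apply Finset.sum_congr rfl
      intro u hu
      have hu' : u < k - i := Finset.mem_range.mp hu
      apply swc
      · exact hcorr u (by omega)
      · have ha1 : i' + u + 1 = i' + (u + 1) := by omega
        have ha2 : i + u + 1 = i + (u + 1) := by omega
        rw [ha1, ha2]
        exact hcorr (u + 1) (by omega)
    have hle := hNsbig i' k' (by omega) hfr
    omega
  exact ⟨ρ', hrun', hacc', hps, part1, part2⟩

end AuxProofs
/-- soundness and completeness. The maximum of `Rew` over traces of `T`
and the maximum of `C` over accepting runs of `P = T ⊗ B` both exist and coincide,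
and some accepting run `ρ*` in prefix-suffix structure attains this common maximum,
its projection being a maximal-reward trace of `T`. -/
theorem statement16 {S A : Type*} [Finite S] [Finite A] {n : ℕ} {Qs : Fin n → Type*}
    [∀ j, Finite (Qs j)] {m : Fin n → ℕ} (hm : ∀ j, 0 < m j)
    (G : ∀ j, GBA (Qs j) A (m j)) (hnb : ∀ j, (G j).NonBlocking)
    (rew : Fin n → ℕ) (hrew : ∀ i j : Fin n, i ≤ j → rew j ≤ rew i)
    (T : LTS S A) (hsucc : ∀ s, ∃ s', (s, s') ∈ T.trans) :
    ∃ Mx : ℕ,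
      (∃ τ, T.IsTrace τ ∧ TraceRew T G rew τ = Mx) ∧
      (∀ τ, T.IsTrace τ → TraceRew T G rew τ ≤ Mx) ∧
      (∃ ρ, IsProdRun T (BAut G rew) ρ ∧ IsProdAccepting T (BAut G rew) ρ ∧
        RunRewardIs (ProdAcc T (BAut G rew)) ρ (ProdStepW T (BWeight rew) ρ) Mx) ∧
      (∀ ρ cv, IsProdRun T (BAut G rew) ρ → IsProdAccepting T (BAut G rew) ρ →
        RunRewardIs (ProdAcc T (BAut G rew)) ρ (ProdStepW T (BWeight rew) ρ) cv →
        cv ≤ Mx) ∧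
      (∃ ρ, IsProdRun T (BAut G rew) ρ ∧ IsProdAccepting T (BAut G rew) ρ ∧
        IsPrefixSuffix (ProdAcc T (BAut G rew)) ρ ∧
        RunRewardIs (ProdAcc T (BAut G rew)) ρ (ProdStepW T (BWeight rew) ρ) Mx ∧
        T.IsTrace (fun i => (ρ i).1) ∧
        TraceRew T G rew (fun i => (ρ i).1) = Mx) := by
  classical
  obtain ⟨τ0, hτ0⟩ := lts_exists_trace T hsucc
  set V : Set ℕ := {v | ∃ τ, T.IsTrace τ ∧ TraceRew T G rew τ = v} with hV
  have hVne : V.Nonempty := ⟨TraceRew T G rew τ0, τ0, hτ0, rfl⟩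
  have hVbdd : BddAbove V := by
    refine ⟨∑ x : Fin n, rew x, ?_⟩
    rintro v ⟨τ, hτ, rfl⟩
    exact traceRew_le T G rew τ
  set Mx := sSup V with hMx
  have hMxV : Mx ∈ V := Nat.sSup_mem hVne hVbdd
  obtain ⟨τs, hτs, hτsval⟩ := hMxV
  have hub : ∀ τ, T.IsTrace τ → TraceRew T G rew τ ≤ Mx :=
    fun τ h => le_csSup hVbdd ⟨τ, h, rfl⟩
  obtain ⟨ρ0, hρ01, hρ02, hρ03⟩ := completeness T hm G hnb rew τs hτs
  rw [hτsval] at hρ03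
  obtain ⟨ρs, hp1, hp2, hp3, hp4⟩ := pumping T G rew ρ0 Mx hρ01 hρ03
  have hsnd := soundness T G rew ρs Mx hp1 hp4
  refine ⟨Mx, ⟨τs, hτs, hτsval⟩, hub, ⟨ρs, hp1, hp2, hp4⟩, ?_, ρs, hp1, hp2, hp3, hp4,
    hsnd.1, ?_⟩
  · intro ρ cv hr ha hC
    have h := soundness T G rew ρ cv hr hC
    exact le_trans h.2 (hub _ h.1)
  · exact le_antisymm (hub _ hsnd.1) hsnd.2
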